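/- Let k ≥ 1 and r ≥ 3 be integers, let G₁, …, G_r be groups, let G = G₁ × ⋯ × G_r, and let ψ : G → ℤ^k be a surjective group homomorphism such that the restriction of ψ to each of at least three distinct factors G_i is surjective onto ℤ^k. Then the commutator subgroup of ker ψ equals the commutator subgroup of G, i.e. [ker ψ, ker ψ] = [G, G] as subgroups of G. (Key claim in the proof of Proposition 7.2.) -/

import Mathlib

open scoped commutatorElement

/-- Key claim in the proof of Proposition 7.2: under the hypotheses of condition (2),
the commutator subgroup of `ker ψ` equals the commutator subgroup of `G = G₁ × ⋯ × G_r`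
(as subgroups of `G`). -/
theorem stmt_11 {k r : ℕ} (hk : 1 ≤ k) (hr : 3 ≤ r)
    (G : Fin r → Type*) [∀ i, Group (G i)]
    (ψ : (∀ i, G i) →* Multiplicative (Fin k → ℤ)) (hψ : Function.Surjective ψ)
    (i₁ i₂ i₃ : Fin r) (h12 : i₁ ≠ i₂) (h13 : i₁ ≠ i₃) (h23 : i₂ ≠ i₃)
    (hs : ∀ i ∈ ({i₁, i₂, i₃} : Set (Fin r)),
      Function.Surjective (ψ.comp (MonoidHom.mulSingle G i))) :
    Subgroup.map ψ.ker.subtype (commutator ↥ψ.ker) = commutator (∀ i, G i) := by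
  classical
  have hmap : Subgroup.map ψ.ker.subtype (commutator ↥ψ.ker) = ⁅ψ.ker, ψ.ker⁆ := by
    rw [commutator_def, Subgroup.map_commutator]
    congr 1 <;> · ext x; simp [Subgroup.mem_map]
  rw [hmap]
  -- key claim: single-factor commutators lie in ⁅ker ψ, ker ψ⁆
  have key : ∀ (i : Fin r) (x y : G i),
      ⁅Pi.mulSingle i x, Pi.mulSingle i y⁆ ∈ ⁅ψ.ker, ψ.ker⁆ := by
    intro i x y
    -- choose two indices j ≠ l, both ≠ i, in {i₁, i₂, i₃}
    obtain ⟨j, l, hjm, hlm, hjl, hji, hli⟩ :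
        ∃ j l : Fin r, j ∈ ({i₁, i₂, i₃} : Set (Fin r)) ∧
          l ∈ ({i₁, i₂, i₃} : Set (Fin r)) ∧ j ≠ l ∧ j ≠ i ∧ l ≠ i := by
      rcases eq_or_ne i i₁ with rfl | h1
      · exact ⟨i₂, i₃, by simp, by simp, h23, fun h => h12 h.symm, fun h => h13 h.symm⟩
      rcases eq_or_ne i i₂ with rfl | h2
      · exact ⟨i₁, i₃, by simp, by simp, h13, fun h => h1 h.symm, fun h => h23 h.symm⟩
      · exact ⟨i₁, i₂, by simp, by simp, h12, fun h => h1 h.symm, fun h => h2 h.symm⟩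
    obtain ⟨u, hu⟩ := hs j hjm (ψ (Pi.mulSingle i x))⁻¹
    obtain ⟨v, hv⟩ := hs l hlm (ψ (Pi.mulSingle i y))⁻¹
    simp only [MonoidHom.comp_apply, MonoidHom.mulSingle_apply] at hu hv
    have ha : Pi.mulSingle i x * Pi.mulSingle j u ∈ ψ.ker := by
      simp [MonoidHom.mem_ker, map_mul, hu]
    have hb : Pi.mulSingle i y * Pi.mulSingle l v ∈ ψ.ker := by
      simp [MonoidHom.mem_ker, map_mul, hv]
    have hcomm : ⁅Pi.mulSingle i x * Pi.mulSingle j u,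
        Pi.mulSingle i y * Pi.mulSingle l v⁆ = ⁅Pi.mulSingle i x, Pi.mulSingle i y⁆ := by
      funext m
      by_cases h1 : m = i
      · subst h1
        simp [commutatorElement_def, Pi.mulSingle_apply, hji.symm, hli.symm]
      · by_cases h2 : m = j
        · subst h2
          simp [commutatorElement_def, Pi.mulSingle_apply, h1, hjl]
        · by_cases h3 : m = l
          · subst h3
            simp [commutatorElement_def, Pi.mulSingle_apply, h1, Ne.symm hjl]
          · simp [commutatorElement_def, Pi.mulSingle_apply, h1, h2, h3]
    rw [← hcomm]
    exact Subgroup.commutator_mem_commutator ha hb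
  apply le_antisymm
  · exact Subgroup.commutator_mono le_top le_top
  have hpi : commutator (∀ i, G i)
      = Subgroup.pi Set.univ (fun i => ⁅(⊤ : Subgroup (G i)), ⊤⁆) := by
    rw [commutator_def, ← Subgroup.commutator_pi_pi_of_finite]
    congr 1 <;> · ext g; simp [Subgroup.mem_pi]
  rw [hpi, Subgroup.pi_le_iff]
  intro m
  rw [Subgroup.map_commutator, Subgroup.commutator_le]
  rintro a ⟨x, -, rfl⟩ b ⟨y, -, rfl⟩
  exact key m x y
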